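/- (Proposition two_min_renewed, Hopf–Lax form.) Let U_o : ℝ → ℝ be Lipschitz continuous and let W := S_T U_o be its Hopf–Lax evolution at time T. Let u_T : ℝ → ℝ be left continuous with u_T(x) = W'(x) for a.e. x ∈ ℝ. Then for every x ∈ ℝ, W(x) = U_o(π_{u_T}(x)) + T·f*((x − π_{u_T}(x))/T), where π_{u_T}(x) := x − T·f'(u_T(x)). -/

import Mathlib

open Filter MeasureTheory

/-- Condition (f): `f` is `C²`, strongly convex (`f'' > 0` everywhere), and
`f' → ∓∞` at `∓∞`. -/
def CondF (f : ℝ → ℝ) : Prop :=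
  ContDiff ℝ 2 f ∧ (∀ x, 0 < deriv (deriv f) x) ∧
    Tendsto (deriv f) atBot atBot ∧ Tendsto (deriv f) atTop atTop

/-- The Legendre transform `f*(y) = sup_x (y·x − f(x))`. -/
noncomputable def legendre (f : ℝ → ℝ) (y : ℝ) : ℝ :=
  sSup (Set.range fun x => y * x - f x)

/-- `U_T(x) = ∫_{x̌}^x u_T`. -/
noncomputable def UT (uT : ℝ → ℝ) (xc x : ℝ) : ℝ := ∫ ξ in xc..x, uT ξ

/-- `U_o^♭(x) = sup_ξ [U_T(ξ) − T f*((ξ−x)/T)]`. -/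
noncomputable def Uflat (f : ℝ → ℝ) (T : ℝ) (uT : ℝ → ℝ) (xc x : ℝ) : ℝ :=
  sSup (Set.range fun ξ => UT uT xc ξ - T * legendre f ((ξ - x) / T))

/-- `M(x)`: the set of maximizers in the definition of `U_o^♭(x)`. -/
def MSet (f : ℝ → ℝ) (T : ℝ) (uT : ℝ → ℝ) (xc x : ℝ) : Set ℝ :=
  {ξ | UT uT xc ξ = Uflat f T uT xc x + T * legendre f ((ξ - x) / T)}

/-- Oleinik condition (O) at `T`. -/
def Oleinik (f : ℝ → ℝ) (T : ℝ) (uT : ℝ → ℝ) : Prop :=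
  ∀ x Δ : ℝ, 0 < Δ → deriv f (uT (x + Δ)) - deriv f (uT x) ≤ Δ / T

/-- The Hopf–Lax operator at time `T`: `(S_T U)(x) = inf_ξ [U(ξ) + T f*((x−ξ)/T)]`. -/
noncomputable def HopfLax (f : ℝ → ℝ) (T : ℝ) (U : ℝ → ℝ) (x : ℝ) : ℝ :=
  sInf (Set.range fun ξ => U ξ + T * legendre f ((x - ξ) / T))

/-- Left continuity of a real function. -/
def LeftCts (u : ℝ → ℝ) : Prop :=
  ∀ x, Tendsto u (nhdsWithin x (Set.Iio x)) (nhds (u x))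

/-- `II_T(U_T; J)`: Lipschitz functions with a.e. derivative in `J` evolving into `U_T`
under the Hopf–Lax semigroup. -/
def IIT (f : ℝ → ℝ) (T : ℝ) (uT : ℝ → ℝ) (xc : ℝ) (J : Set ℝ) : Set (ℝ → ℝ) :=
  {U | (∃ K, LipschitzWith K U) ∧ (∀ᵐ x ∂volume, deriv U x ∈ J) ∧
    ∀ x, HopfLax f T U x = UT uT xc x}

/-- `U_o^♯(x) = sup { U(x) : U ∈ II_T(U_T; J) }`. -/
noncomputable def Usharp (f : ℝ → ℝ) (T : ℝ) (uT : ℝ → ℝ) (xc : ℝ) (J : Set ℝ) (x : ℝ) : ℝ :=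
  sSup ((fun U : ℝ → ℝ => U x) '' IIT f T uT xc J)

section Aux
open Set
noncomputable def lphi (f : ℝ → ℝ) : ℝ → ℝ := Function.invFun (deriv f)

variable {f : ℝ → ℝ}

lemma condF_deriv_contDiff (hf : CondF f) : ContDiff ℝ 1 (deriv f) := by
  have h2 : ContDiff ℝ ((1:WithTop ℕ∞) + 1) f := by
    have := hf.1
    norm_num at this ⊢
    exact this
  exact (contDiff_succ_iff_deriv.mp h2).2.2

lemma condF_diff (hf : CondF f) : Differentiable ℝ f :=
  hf.1.differentiable (by norm_num)

lemma condF_strictMono (hf : CondF f) : StrictMono (deriv f) :=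
  strictMono_of_deriv_pos hf.2.1

lemma condF_surj (hf : CondF f) : Function.Surjective (deriv f) :=
  (condF_deriv_contDiff hf).continuous.surjective hf.2.2.2 hf.2.2.1

lemma phi_spec (hf : CondF f) (y : ℝ) : deriv f (lphi f y) = y :=
  Function.rightInverse_invFun (condF_surj hf) y

lemma phi_left (hf : CondF f) (x : ℝ) : lphi f (deriv f x) = x :=
  Function.leftInverse_invFun (condF_strictMono hf).injective x

lemma phi_continuous (hf : CondF f) : Continuous (lphi f) := by
  have h : lphi f = ⇑(StrictMono.orderIsoOfSurjective (deriv f) (condF_strictMono hf) (condF_surj hf)).symm := by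
    funext y
    apply (condF_strictMono hf).injective
    rw [phi_spec hf]
    set e := StrictMono.orderIsoOfSurjective (deriv f) (condF_strictMono hf) (condF_surj hf) with he
    have : deriv f (e.symm y) = e (e.symm y) := by
      rw [he, StrictMono.coe_orderIsoOfSurjective]
    rw [this, e.apply_symm_apply]
  rw [h]
  exact OrderIso.continuous _

lemma phi_hasDerivAt (hf : CondF f) (y : ℝ) :
    HasDerivAt (lphi f) (deriv (deriv f) (lphi f y))⁻¹ y := by
  apply HasDerivAt.of_local_left_inverse (phi_continuous hf).continuousAt
    (((condF_deriv_contDiff hf).differentiable one_ne_zero (lphi f y)).hasDerivAt)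
    (hf.2.1 _).ne'
  exact Eventually.of_forall (phi_spec hf)

lemma tangent_le (hf : CondF f) {y x₀ : ℝ} (h₀ : deriv f x₀ = y) (x : ℝ) :
    y * x - f x ≤ y * x₀ - f x₀ := by
  have dF := condF_diff hf
  rcases lt_trichotomy x x₀ with h | h | h
  · obtain ⟨c, hc, hceq⟩ := exists_hasDerivAt_eq_slope f (deriv f) h
      (dF.continuous.continuousOn) (fun z _ => (dF z).hasDerivAt)
    have hlt : deriv f c < y := h₀ ▸ condF_strictMono hf hc.2
    rw [hceq] at hlt
    have := (div_lt_iff₀ (by linarith : (0:ℝ) < x₀ - x)).mp hlt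
    nlinarith
  · rw [h]
  · obtain ⟨c, hc, hceq⟩ := exists_hasDerivAt_eq_slope f (deriv f) h
      (dF.continuous.continuousOn) (fun z _ => (dF z).hasDerivAt)
    have hlt : y < deriv f c := h₀ ▸ condF_strictMono hf hc.1
    rw [hceq] at hlt
    have := (lt_div_iff₀ (by linarith : (0:ℝ) < x - x₀)).mp hlt
    nlinarith

lemma legendre_bddAbove (hf : CondF f) (y : ℝ) :
    BddAbove (Set.range fun x => y * x - f x) := by
  refine ⟨y * lphi f y - f (lphi f y), ?_⟩
  rintro _ ⟨x, rfl⟩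
  exact tangent_le hf (phi_spec hf y) x

lemma legendre_eq (hf : CondF f) (y : ℝ) :
    legendre f y = y * lphi f y - f (lphi f y) := by
  refine le_antisymm (csSup_le ⟨y * 0 - f 0, ⟨0, rfl⟩⟩ ?_)
    (le_csSup (legendre_bddAbove hf y) ⟨lphi f y, rfl⟩)
  rintro _ ⟨x, rfl⟩
  exact tangent_le hf (phi_spec hf y) x

lemma legendre_fenchel (hf : CondF f) (p : ℝ) :
    legendre f (deriv f p) = deriv f p * p - f p := by
  rw [legendre_eq hf, phi_left hf]

lemma legendre_ge (hf : CondF f) (y x : ℝ) : y * x - f x ≤ legendre f y :=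
  le_csSup (legendre_bddAbove hf y) ⟨x, rfl⟩

lemma legendre_continuous (hf : CondF f) : Continuous (legendre f) := by
  have : legendre f = fun y => y * lphi f y - f (lphi f y) := funext (legendre_eq hf)
  rw [this]
  exact (continuous_id.mul (phi_continuous hf)).sub
    ((condF_diff hf).continuous.comp (phi_continuous hf))

lemma legendre_hasDerivAt (hf : CondF f) (y : ℝ) :
    HasDerivAt (legendre f) (lphi f y) y := by
  have hφ := phi_hasDerivAt hf y
  have h1 : HasDerivAt (fun z => z * lphi f z - f (lphi f z))
      (1 * lphi f y + y * (deriv (deriv f) (lphi f y))⁻¹ -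
        deriv f (lphi f y) * (deriv (deriv f) (lphi f y))⁻¹) y :=
    ((hasDerivAt_id y).mul hφ).sub
      (((condF_diff hf (lphi f y)).hasDerivAt).comp y hφ)
  have h2 : HasDerivAt (fun z => z * lphi f z - f (lphi f z)) (lphi f y) y := by
    convert h1 using 1
    rw [phi_spec hf]
    ring
  exact h2.congr_of_eventuallyEq (Eventually.of_forall fun z => legendre_eq hf z)

lemma legendre_coercive (hf : CondF f) {c : ℝ} (hc : 0 ≤ c) (y : ℝ) :
    c * |y| - max (f c) (f (-c)) ≤ legendre f y := by
  rcases le_or_gt 0 y with h | h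
  · have := legendre_ge hf y c
    rw [abs_of_nonneg h]
    have := le_max_left (f c) (f (-c))
    nlinarith
  · have := legendre_ge hf y (-c)
    rw [abs_of_neg h]
    have := le_max_right (f c) (f (-c))
    nlinarith

variable {T : ℝ} {Uo : ℝ → ℝ} {K : NNReal}

lemma lip_bound (hUo : LipschitzWith K Uo) (a b : ℝ) :
    Uo a - Uo b ≤ (K : ℝ) * |a - b| := by
  have := hUo.dist_le_mul a b
  rw [Real.dist_eq, Real.dist_eq] at this
  have h1 := le_abs_self (Uo a - Uo b)
  linarith

lemma Phi_lower (hf : CondF f) (hT : 0 < T) (hUo : LipschitzWith K Uo) (x ξ : ℝ) :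
    Uo x + |x - ξ| - T * max (f ((K:ℝ)+1)) (f (-((K:ℝ)+1))) ≤
      Uo ξ + T * legendre f ((x - ξ) / T) := by
  set M := max (f ((K:ℝ)+1)) (f (-((K:ℝ)+1))) with hM
  have h1 : ((K:ℝ)+1) * |(x - ξ)/T| - M ≤ legendre f ((x - ξ)/T) :=
    legendre_coercive hf (by positivity) _
  have h2 : |(x - ξ)/T| = |x - ξ| / T := by
    rw [abs_div, abs_of_pos hT]
  rw [h2] at h1
  have h3 : T * (((K:ℝ)+1) * (|x - ξ| / T) - M) ≤ T * legendre f ((x - ξ)/T) :=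
    mul_le_mul_of_nonneg_left h1 hT.le
  have h4 : T * (((K:ℝ)+1) * (|x - ξ| / T) - M) = ((K:ℝ)+1) * |x - ξ| - T * M := by
    field_simp
  rw [h4] at h3
  have h5 := lip_bound hUo x ξ
  linarith

lemma HL_bddBelow (hf : CondF f) (hT : 0 < T) (hUo : LipschitzWith K Uo) (x : ℝ) :
    BddBelow (Set.range fun ξ => Uo ξ + T * legendre f ((x - ξ) / T)) := by
  refine ⟨Uo x - T * max (f ((K:ℝ)+1)) (f (-((K:ℝ)+1))), ?_⟩
  rintro _ ⟨ξ, rfl⟩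
  have := Phi_lower hf hT hUo x ξ
  have := abs_nonneg (x - ξ)
  linarith

lemma HL_le (hf : CondF f) (hT : 0 < T) (hUo : LipschitzWith K Uo) (x ξ : ℝ) :
    HopfLax f T Uo x ≤ Uo ξ + T * legendre f ((x - ξ) / T) :=
  csInf_le (HL_bddBelow hf hT hUo x) ⟨ξ, rfl⟩

lemma HL_attained (hf : CondF f) (hT : 0 < T) (hUo : LipschitzWith K Uo) (x : ℝ) :
    ∃ ξ₀, HopfLax f T Uo x = Uo ξ₀ + T * legendre f ((x - ξ₀) / T) := by
  set M := max (f ((K:ℝ)+1)) (f (-((K:ℝ)+1))) with hM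
  set Φ : ℝ → ℝ := fun ξ => Uo ξ + T * legendre f ((x - ξ) / T) with hΦ
  have hcont : Continuous Φ := by
    apply hUo.continuous.add
    exact continuous_const.mul ((legendre_continuous hf).comp
      ((continuous_const.sub continuous_id).div_const T))
  set R := T * M + (Φ x - Uo x)
  have hcc : ∀ᶠ ξ in cocompact ℝ, Φ x ≤ Φ ξ := by
    refine eventually_of_mem ((isCompact_closedBall x |R|).compl_mem_cocompact) ?_
    intro ξ hξ
    simp only [Metric.mem_closedBall, not_le, Set.mem_compl_iff] at hξ
    rw [Real.dist_eq] at hξ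
    have h5 : |x - ξ| = |ξ - x| := abs_sub_comm x ξ
    have h6 := le_abs_self R
    have := Phi_lower hf hT hUo x ξ
    have h7 : Uo ξ + T * legendre f ((x - ξ) / T) = Φ ξ := rfl
    have h8 : R = T * M + (Φ x - Uo x) := rfl
    rw [h7] at this
    linarith
  obtain ⟨ξ₀, hξ₀⟩ := hcont.exists_forall_le' x hcc
  refine ⟨ξ₀, le_antisymm (HL_le hf hT hUo x ξ₀) ?_⟩
  refine le_csInf ⟨Φ x, ⟨x, rfl⟩⟩ ?_
  rintro _ ⟨ξ, rfl⟩
  exact hξ₀ ξ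

lemma HL_lip_ineq (hf : CondF f) (hT : 0 < T) (hUo : LipschitzWith K Uo) (x₁ x₂ : ℝ) :
    HopfLax f T Uo x₁ ≤ HopfLax f T Uo x₂ + (K : ℝ) * |x₁ - x₂| := by
  have h : HopfLax f T Uo x₁ - (K : ℝ) * |x₁ - x₂| ≤ HopfLax f T Uo x₂ := by
    refine le_csInf ⟨_, ⟨x₂, rfl⟩⟩ ?_
    rintro _ ⟨ξ, rfl⟩
    have h1 := HL_le hf hT hUo x₁ (ξ + (x₁ - x₂))
    have h2 : x₁ - (ξ + (x₁ - x₂)) = x₂ - ξ := by ring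
    rw [h2] at h1
    have h3 := lip_bound hUo (ξ + (x₁ - x₂)) ξ
    have h4 : ξ + (x₁ - x₂) - ξ = x₁ - x₂ := by ring
    rw [h4] at h3
    linarith
  linarith

lemma HL_continuous (hf : CondF f) (hT : 0 < T) (hUo : LipschitzWith K Uo) :
    Continuous (HopfLax f T Uo) := by
  refine (LipschitzWith.of_dist_le_mul (K := K) fun a b => ?_).continuous
  rw [Real.dist_eq, Real.dist_eq, abs_sub_le_iff]
  constructor
  · have := HL_lip_ineq hf hT hUo a b; linarith
  · have := HL_lip_ineq hf hT hUo b a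
    rw [abs_sub_comm] at this; linarith

lemma key_step (hf : CondF f) (hT : 0 < T) (hUo : LipschitzWith K Uo) {x p : ℝ}
    (hd : HasDerivAt (HopfLax f T Uo) p x) :
    HopfLax f T Uo x = Uo (x - T * deriv f p) + T * legendre f (deriv f p) := by
  obtain ⟨ξ₀, heq⟩ := HL_attained hf hT hUo x
  set y₀ := (x - ξ₀) / T with hy₀
  set D : ℝ → ℝ := fun h =>
    Uo ξ₀ + T * legendre f ((x + h - ξ₀) / T) - HopfLax f T Uo (x + h) with hD
  have hD0 : D 0 = 0 := by
    simp only [hD]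
    rw [show x + 0 - ξ₀ = x - ξ₀ by ring, show x + 0 = x by ring]
    rw [heq]; ring
  have hDnn : ∀ h, 0 ≤ D h := fun h => by
    have := HL_le hf hT hUo (x + h) ξ₀
    simp only [hD]; linarith
  have hlm : IsLocalMin D 0 := Eventually.of_forall fun h => by
    rw [hD0]; exact hDnn h
  -- derivative of D at 0
  have h1 : HasDerivAt (fun h : ℝ => (x + h - ξ₀) / T) (1 / T) 0 := by
    simpa using (((hasDerivAt_id (0:ℝ)).const_add x).sub_const ξ₀).div_const T
  have h2 : HasDerivAt (fun h : ℝ => legendre f ((x + h - ξ₀) / T))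
      (lphi f y₀ * (1 / T)) 0 := by
    have harg : ((x + (0:ℝ) - ξ₀) / T) = y₀ := by rw [hy₀]; ring_nf
    have hl : HasDerivAt (legendre f) (lphi f y₀) ((x + (0:ℝ) - ξ₀) / T) := by
      rw [harg]; exact legendre_hasDerivAt hf y₀
    exact hl.comp 0 h1
  have h3 : HasDerivAt (fun h : ℝ => HopfLax f T Uo (x + h)) (p * 1) 0 := by
    have hd' : HasDerivAt (HopfLax f T Uo) p (x + (0:ℝ)) := by
      rw [show x + (0:ℝ) = x from by ring]; exact hd
    exact hd'.comp 0 ((hasDerivAt_id (0:ℝ)).const_add x)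
  have hDd : HasDerivAt D (T * (lphi f y₀ * (1 / T)) - p * 1) 0 :=
    ((h2.const_mul T).const_add (Uo ξ₀)).sub h3
  have hz := hlm.hasDerivAt_eq_zero hDd
  have hsimp : T * (lphi f y₀ * (1 / T)) - p * 1 = lphi f y₀ - p := by
    field_simp
  rw [hsimp] at hz
  have hφp : lphi f y₀ = p := by linarith
  have hyp : deriv f p = y₀ := by
    rw [← hφp, phi_spec hf]
  have hξ₀ : ξ₀ = x - T * deriv f p := by
    rw [hyp, hy₀]; field_simp; ring
  rw [heq, hξ₀, hyp]

theorem stmt_12' (f : ℝ → ℝ) (hf : CondF f) (T : ℝ) (hT : 0 < T)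
    (Uo : ℝ → ℝ) (K : NNReal) (hUo : LipschitzWith K Uo)
    (uT : ℝ → ℝ) (hlc : ∀ x, Tendsto uT (nhdsWithin x (Set.Iio x)) (nhds (uT x)))
    (hW : ∀ᵐ x ∂volume, HasDerivAt (HopfLax f T Uo) (uT x) x) :
    ∀ x : ℝ,
      HopfLax f T Uo x =
        Uo (x - T * deriv f (uT x)) +
          T * legendre f ((x - (x - T * deriv f (uT x))) / T) := by
  intro x
  have hcontW := HL_continuous hf hT hUo
  have hcf' := (condF_deriv_contDiff hf).continuous
  set G : ℝ → ℝ := fun z =>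
    HopfLax f T Uo z -
      (Uo (z - T * deriv f (uT z)) + T * legendre f (deriv f (uT z))) with hG
  have hGzero : ∀ z, HasDerivAt (HopfLax f T Uo) (uT z) z → G z = 0 := fun z hz => by
    simp only [hG]
    rw [key_step hf hT hUo hz]
    ring
  have hfreq : ∃ᶠ z in nhdsWithin x (Set.Iio x), G z = 0 := by
    by_contra hcon
    rw [Filter.not_frequently] at hcon
    have h1 : ∀ᶠ z in nhdsWithin x (Set.Iio x),
        ¬ HasDerivAt (HopfLax f T Uo) (uT z) z := by
      filter_upwards [hcon] with z hz hder
      exact hz (hGzero z hder)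
    obtain ⟨l, hl, hsub⟩ := mem_nhdsLT_iff_exists_Ioo_subset.mp h1
    have hnull : volume {z : ℝ | ¬ HasDerivAt (HopfLax f T Uo) (uT z) z} = 0 :=
      ae_iff.mp hW
    have h2 : volume (Set.Ioo l x) = 0 := measure_mono_null hsub hnull
    rw [Real.volume_Ioo] at h2
    rw [ENNReal.ofReal_eq_zero] at h2
    rw [Set.mem_Iio] at hl
    linarith
  have hid : Tendsto (fun z : ℝ => z) (nhdsWithin x (Set.Iio x)) (nhds x) :=
    tendsto_id.mono_left nhdsWithin_le_nhds
  have hderuT : Tendsto (fun z => deriv f (uT z)) (nhdsWithin x (Set.Iio x))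
      (nhds (deriv f (uT x))) := (hcf'.continuousAt.tendsto).comp (hlc x)
  have hlim : Tendsto G (nhdsWithin x (Set.Iio x)) (nhds (G x)) := by
    apply Tendsto.sub (hcontW.continuousAt.tendsto.comp hid)
    apply Tendsto.add
    · exact (hUo.continuous.continuousAt.tendsto).comp
        (hid.sub (tendsto_const_nhds.mul hderuT))
    · exact tendsto_const_nhds.mul
        (((legendre_continuous hf).continuousAt.tendsto).comp hderuT)
  have hGx : G x = 0 := tendsto_nhds_unique_of_frequently_eq hlim tendsto_const_nhds hfreq
  have harg : (x - (x - T * deriv f (uT x))) / T = deriv f (uT x) := by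
    rw [div_eq_iff hT.ne']; ring
  rw [harg]
  simp only [hG] at hGx
  linarith

end Aux

theorem stmt_12 (f : ℝ → ℝ) (hf : CondF f) (T : ℝ) (hT : 0 < T)
    (Uo : ℝ → ℝ) (K : NNReal) (hUo : LipschitzWith K Uo)
    (uT : ℝ → ℝ) (hlc : LeftCts uT)
    (hW : ∀ᵐ x ∂volume, HasDerivAt (HopfLax f T Uo) (uT x) x) :
    ∀ x : ℝ,
      HopfLax f T Uo x =
        Uo (x - T * deriv f (uT x)) +
          T * legendre f ((x - (x - T * deriv f (uT x))) / T) := by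
  exact stmt_12' f hf T hT Uo K hUo uT hlc hW
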